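/- Gamma-lasso penalized regression (Proposition 3): Let N ≥ 1, s, r > 0, and let L : ℝ^N → ℝ be any function (e.g., a negative log likelihood). Define F(φ, λ) = L(φ) + Σ_{j=1}^N (−s·log λ_j + (r + |φ_j|)λ_j) for φ ∈ ℝ^N and λ ∈ (0,∞)^N, and the profiled objective F̃(φ) = L(φ) + Σ_{j=1}^N s·log(1 + |φ_j|/r). Then a pair (φ̂, λ̂) is a global minimizer of F over ℝ^N × (0,∞)^N if and only if φ̂ is a global minimizer of F̃ over ℝ^N and λ̂_j = s/(r + |φ̂_j|) for every j. MAP estimation under independent gamma-Laplace priors is thus equivalent to minimizing the negative log likelihood subject to the costs c(φ_j) = s·log(1 + |φ_j|/r). -/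

import Mathlib

open Real Finset

/-- Joint negative log posterior (up to constants) under independent gamma-Laplace
priors: negative log likelihood plus `∑_j (−s log λ_j + (r + |φ_j|) λ_j)`. -/
noncomputable def jointObjective (N : ℕ) (s r : ℝ) (L : (Fin N → ℝ) → ℝ)
    (φ lam : Fin N → ℝ) : ℝ :=
  L φ + ∑ j, (-(s * Real.log (lam j)) + (r + |φ j|) * lam j)

/-- Profiled (gamma-lasso) objective: negative log likelihood plus the gamma-lasso
penalties `c(φ_j) = s log(1 + |φ_j|/r)`. -/
noncomputable def profiledObjective (N : ℕ) (s r : ℝ) (L : (Fin N → ℝ) → ℝ)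
    (φ : Fin N → ℝ) : ℝ :=
  L φ + ∑ j, s * Real.log (1 + |φ j| / r)

lemma gl_term_ge {s a l : ℝ} (hs : 0 < s) (ha : 0 < a) (hl : 0 < l) :
    s * Real.log a - s * Real.log s + s ≤ -(s * Real.log l) + a * l := by
  have h := Real.log_le_sub_one_of_pos (show (0:ℝ) < l * a / s by positivity)
  rw [Real.log_div (by positivity) (ne_of_gt hs),
    Real.log_mul (ne_of_gt hl) (ne_of_gt ha)] at h
  have h2 := mul_le_mul_of_nonneg_left h hs.le
  have h3 : s * (l * a / s - 1) = l * a - s := by field_simp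
  rw [h3] at h2
  nlinarith

lemma gl_term_gt {s a l : ℝ} (hs : 0 < s) (ha : 0 < a) (hl : 0 < l)
    (hne : l ≠ s / a) :
    s * Real.log a - s * Real.log s + s < -(s * Real.log l) + a * l := by
  have hx : l * a / s ≠ 1 := by
    intro h
    apply hne
    field_simp at h ⊢
    linarith [h]
  have h := Real.log_lt_sub_one_of_pos (show (0:ℝ) < l * a / s by positivity) hx
  rw [Real.log_div (by positivity) (ne_of_gt hs),
    Real.log_mul (ne_of_gt hl) (ne_of_gt ha)] at h
  have h2 := mul_lt_mul_of_pos_left h hs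
  have h3 : s * (l * a / s - 1) = l * a - s := by field_simp
  rw [h3] at h2
  nlinarith

lemma gl_term_eq {s a : ℝ} (hs : 0 < s) (ha : 0 < a) :
    -(s * Real.log (s / a)) + a * (s / a) = s * Real.log a - s * Real.log s + s := by
  rw [Real.log_div (ne_of_gt hs) (ne_of_gt ha), mul_div_cancel₀ _ (ne_of_gt ha)]
  ring

/-- Value of the joint objective at the per-coordinate optimal `λ`. -/
lemma gl_eq_opt (N : ℕ) (s r : ℝ) (hs : 0 < s) (hr : 0 < r)
    (L : (Fin N → ℝ) → ℝ) (φ : Fin N → ℝ) :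
    jointObjective N s r L φ (fun j => s / (r + |φ j|)) =
      profiledObjective N s r L φ + N * (s * Real.log r - s * Real.log s + s) := by
  unfold jointObjective profiledObjective
  have key : ∀ j : Fin N,
      -(s * Real.log ((fun j => s / (r + |φ j|)) j)) + (r + |φ j|) * ((fun j => s / (r + |φ j|)) j)
        = s * Real.log (1 + |φ j| / r) + (s * Real.log r - s * Real.log s + s) := by
    intro j
    have ha : 0 < r + |φ j| := by positivity
    simp only
    rw [gl_term_eq hs ha]
    have h1 : (1 : ℝ) + |φ j| / r = (r + |φ j|) / r := by field_simp
    rw [h1, Real.log_div (ne_of_gt ha) (ne_of_gt hr)]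
    ring
  rw [Finset.sum_congr rfl (fun j _ => key j), Finset.sum_add_distrib,
    Finset.sum_const, Finset.card_univ, Fintype.card_fin]
  push_cast
  ring

lemma gl_opt_le (N : ℕ) (s r : ℝ) (hs : 0 < s) (hr : 0 < r)
    (L : (Fin N → ℝ) → ℝ) (φ lam : Fin N → ℝ) (hlam : ∀ j, 0 < lam j) :
    jointObjective N s r L φ (fun j => s / (r + |φ j|)) ≤ jointObjective N s r L φ lam := by
  unfold jointObjective
  apply add_le_add (le_refl _)
  apply Finset.sum_le_sum
  intro j _
  have ha : 0 < r + |φ j| := by positivity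
  simp only
  rw [gl_term_eq hs ha]
  exact gl_term_ge hs ha (hlam j)

/-- Gamma-lasso penalized regression (Proposition 3): `(φ̂, λ̂)` globally minimizes the
joint objective over `ℝ^N × (0,∞)^N` iff `φ̂` globally minimizes the profiled
gamma-lasso objective and `λ̂_j = s/(r + |φ̂_j|)` for every `j`. -/
theorem gammaLasso_map_equivalence
    (N : ℕ) (hN : 1 ≤ N) (s r : ℝ) (hs : 0 < s) (hr : 0 < r)
    (L : (Fin N → ℝ) → ℝ)
    (φhat lamhat : Fin N → ℝ) (hlam : ∀ j, 0 < lamhat j) :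
    (∀ (φ lam : Fin N → ℝ), (∀ j, 0 < lam j) →
        jointObjective N s r L φhat lamhat ≤ jointObjective N s r L φ lam)
      ↔ ((∀ φ : Fin N → ℝ, profiledObjective N s r L φhat ≤ profiledObjective N s r L φ)
          ∧ ∀ j, lamhat j = s / (r + |φhat j|)) := by
  constructor
  · intro h
    have hform : ∀ j, lamhat j = s / (r + |φhat j|) := by
      by_contra hc
      push_neg at hc
      obtain ⟨j, hj⟩ := hc
      have hlt : jointObjective N s r L φhat (fun j => s / (r + |φhat j|))
          < jointObjective N s r L φhat lamhat := by
        unfold jointObjective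
        apply add_lt_add_of_le_of_lt (le_refl _)
        apply Finset.sum_lt_sum
        · intro i _
          have ha : 0 < r + |φhat i| := by positivity
          simp only
          rw [gl_term_eq hs ha]
          exact gl_term_ge hs ha (hlam i)
        · refine ⟨j, Finset.mem_univ j, ?_⟩
          have ha : 0 < r + |φhat j| := by positivity
          simp only
          rw [gl_term_eq hs ha]
          exact gl_term_gt hs ha (hlam j) hj
      have hle := h φhat (fun j => s / (r + |φhat j|)) (fun j => by positivity)
      linarith
    refine ⟨?_, hform⟩
    intro φ
    have h1 : lamhat = fun j => s / (r + |φhat j|) := funext hform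
    have h2 := h φ (fun j => s / (r + |φ j|)) (fun j => by positivity)
    rw [h1, gl_eq_opt N s r hs hr L φhat, gl_eq_opt N s r hs hr L φ] at h2
    linarith
  · rintro ⟨hmin, hform⟩ φ lam hlampos
    have h1 : lamhat = fun j => s / (r + |φhat j|) := funext hform
    rw [h1, gl_eq_opt N s r hs hr L φhat]
    have h2 := gl_opt_le N s r hs hr L φ lam hlampos
    rw [gl_eq_opt N s r hs hr L φ] at h2
    have := hmin φ
    linarith
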